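/- Let v : ℝ² → ℝ be C¹ on an open neighborhood of the closed unit square [0,1]², and let 0 < ε ≤ 1. Then ∫₀¹ ∫₀^ε v(x₁,x₂)² dx₂ dx₁ ≤ 2ε · ∫_{[0,1]²} (v(x)² + (∂₂v(x))²) dx. -/

import Mathlib

open MeasureTheory Set

/-- second partial derivative of a function on `ℝ²` -/
noncomputable def pd2 (u : ℝ × ℝ → ℝ) (x : ℝ × ℝ) : ℝ := fderiv ℝ u x (0, 1)

/-- A classical-derivative version of Lemma 3.2 of the paper (with κ = μ = 1):
the `L²` norm of a function over a boundary strip of width `ε` in the unit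
square is controlled by `√ε` times its `H¹` norm. -/
theorem strip_estimate
    (v : ℝ × ℝ → ℝ) (U : Set (ℝ × ℝ)) (hU : IsOpen U)
    (hUc : Set.Icc (0:ℝ) 1 ×ˢ Set.Icc (0:ℝ) 1 ⊆ U)
    (hv : ContDiffOn ℝ 1 v U)
    (ε : ℝ) (hε0 : 0 < ε) (hε1 : ε ≤ 1) :
    (∫ x₁ in (0:ℝ)..1, ∫ x₂ in (0:ℝ)..ε, (v (x₁, x₂)) ^ 2) ≤
      2 * ε * ∫ x in Set.Icc (0:ℝ) 1 ×ˢ Set.Icc (0:ℝ) 1,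
        ((v x) ^ 2 + (pd2 v x) ^ 2) := by
  have hvc : ContinuousOn v U := hv.continuousOn
  have hdc : ContinuousOn (pd2 v) U :=
    (hv.continuousOn_fderiv_of_isOpen hU le_rfl).clm_apply continuousOn_const
  set F : ℝ × ℝ → ℝ := fun x => (v x) ^ 2 + (pd2 v x) ^ 2 with hF
  set Q : Set (ℝ × ℝ) := Set.Icc (0:ℝ) 1 ×ˢ Set.Icc (0:ℝ) 1 with hQ
  have hFc : ContinuousOn F Q :=
    (((hvc.mono hUc).pow 2).add ((hdc.mono hUc).pow 2))
  have hQc : IsCompact Q := isCompact_Icc.prod isCompact_Icc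
  have hFint : IntegrableOn F Q := hFc.integrableOn_compact hQc
  -- curves along vertical lines
  have memU : ∀ x₁ ∈ Icc (0:ℝ) 1, ∀ s ∈ Icc (0:ℝ) 1, (x₁, s) ∈ U :=
    fun x₁ hx₁ s hs => hUc ⟨hx₁, hs⟩
  have hline : ∀ (x₁ : ℝ), Continuous (fun s : ℝ => (x₁, s)) :=
    fun x₁ => (continuous_const.prodMk continuous_id)
  have cg : ∀ x₁ ∈ Icc (0:ℝ) 1, ContinuousOn (fun s => v (x₁, s)) (Icc (0:ℝ) 1) :=
    fun x₁ hx₁ => hvc.comp (hline x₁).continuousOn (memU x₁ hx₁)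
  have cg' : ∀ x₁ ∈ Icc (0:ℝ) 1, ContinuousOn (fun s => pd2 v (x₁, s)) (Icc (0:ℝ) 1) :=
    fun x₁ hx₁ => hdc.comp (hline x₁).continuousOn (memU x₁ hx₁)
  have hder : ∀ x₁ ∈ Icc (0:ℝ) 1, ∀ s ∈ Icc (0:ℝ) 1,
      HasDerivAt (fun t => v (x₁, t)) (pd2 v (x₁, s)) s := by
    intro x₁ hx₁ s hs
    have hmem : (x₁, s) ∈ U := memU x₁ hx₁ s hs
    have hd : DifferentiableAt ℝ v (x₁, s) :=
      (hv.differentiableOn one_ne_zero).differentiableAt (hU.mem_nhds hmem)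
    have h2 : HasDerivAt (fun t : ℝ => ((x₁ : ℝ), t)) ((0:ℝ), (1:ℝ)) s := by
      simpa using (hasDerivAt_const s x₁).prodMk (hasDerivAt_id s)
    simpa [pd2, Function.comp_def] using hd.hasFDerivAt.comp_hasDerivAt s h2
  -- definition of inner full integral
  set G : ℝ → ℝ := fun x₁ => ∫ t in (0:ℝ)..1, F (x₁, t) with hG
  -- pointwise key bound
  have key : ∀ x₁ ∈ Icc (0:ℝ) 1, ∀ x₂ ∈ Icc (0:ℝ) ε,
      (v (x₁, x₂)) ^ 2 ≤ 2 * G x₁ := by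
    intro x₁ hx₁ x₂ hx₂
    have hx₂1 : x₂ ∈ Icc (0:ℝ) 1 := ⟨hx₂.1, hx₂.2.trans hε1⟩
    have hFi : IntervalIntegrable (fun t => F (x₁, t)) volume 0 1 := by
      apply ContinuousOn.intervalIntegrable
      have := ((cg x₁ hx₁).pow 2).add ((cg' x₁ hx₁).pow 2)
      rw [Set.uIcc_of_le (zero_le_one' ℝ)]; exact this
    have hsq : ∀ s ∈ Icc (0:ℝ) 1,
        HasDerivAt (fun t => (v (x₁, t)) ^ 2) (2 * v (x₁, s) * pd2 v (x₁, s)) s := by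
      intro s hs
      have := (hder x₁ hx₁ s hs).pow 2
      norm_num at this
      exact this
    have habs : ∀ s ∈ Icc (0:ℝ) 1, |2 * v (x₁, s) * pd2 v (x₁, s)| ≤ F (x₁, s) := by
      intro s hs
      have : |2 * v (x₁, s) * pd2 v (x₁, s)| = 2 * |v (x₁, s)| * |pd2 v (x₁, s)| := by
        rw [abs_mul, abs_mul]; norm_num
      rw [this]
      calc 2 * |v (x₁, s)| * |pd2 v (x₁, s)| ≤ |v (x₁, s)| ^ 2 + |pd2 v (x₁, s)| ^ 2 :=
            two_mul_le_add_sq _ _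
        _ = F (x₁, s) := by simp [hF, sq_abs]
    have hd'cont : ContinuousOn (fun s => 2 * v (x₁, s) * pd2 v (x₁, s)) (Icc (0:ℝ) 1) :=
      ((continuousOn_const.mul (cg x₁ hx₁)).mul (cg' x₁ hx₁))
    -- step 1: for each t ∈ [0,1], v(x₁,x₂)² ≤ v(x₁,t)² + G x₁
    have step1 : ∀ t ∈ Icc (0:ℝ) 1, (v (x₁, x₂)) ^ 2 ≤ (v (x₁, t)) ^ 2 + G x₁ := by
      intro t ht
      have hsub : uIcc t x₂ ⊆ Icc (0:ℝ) 1 := by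
        rw [uIcc]
        exact Icc_subset_Icc (le_min ht.1 hx₂1.1) (max_le ht.2 hx₂1.2)
      have hderi : IntervalIntegrable (fun s => 2 * v (x₁, s) * pd2 v (x₁, s)) volume t x₂ :=
        (hd'cont.mono hsub).intervalIntegrable
      have ftc := intervalIntegral.integral_eq_sub_of_hasDerivAt
        (f := fun t => (v (x₁, t)) ^ 2) (fun s hs => hsq s (hsub hs)) hderi
      have heq : (v (x₁, x₂)) ^ 2 = (v (x₁, t)) ^ 2 +
          ∫ s in t..x₂, 2 * v (x₁, s) * pd2 v (x₁, s) := by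
        rw [ftc]; ring
      rw [heq]
      gcongr
      calc (∫ s in t..x₂, 2 * v (x₁, s) * pd2 v (x₁, s))
          ≤ |∫ s in t..x₂, 2 * v (x₁, s) * pd2 v (x₁, s)| := le_abs_self _
        _ ≤ ∫ s in uIoc t x₂, |2 * v (x₁, s) * pd2 v (x₁, s)| := by
            have := intervalIntegral.norm_integral_le_integral_norm_uIoc
                (f := fun s => 2 * v (x₁, s) * pd2 v (x₁, s)) (a := t) (b := x₂) (μ := volume)
            simp only [Real.norm_eq_abs] at this
            exact this
        _ ≤ ∫ s in Icc (0:ℝ) 1, |2 * v (x₁, s) * pd2 v (x₁, s)| := by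
            apply setIntegral_mono_set
            · exact (hd'cont.abs).integrableOn_compact isCompact_Icc
            · filter_upwards with s using abs_nonneg _
            · exact HasSubset.Subset.eventuallyLE
                (fun x hx => hsub (uIoc_subset_uIcc hx))
        _ ≤ ∫ s in Icc (0:ℝ) 1, F (x₁, s) := by
            apply setIntegral_mono_on
            · exact (hd'cont.abs).integrableOn_compact isCompact_Icc
            · exact (((cg x₁ hx₁).pow 2).add ((cg' x₁ hx₁).pow 2)).integrableOn_compact
                isCompact_Icc
            · exact measurableSet_Icc
            · exact habs
        _ = G x₁ := by
            simp only [hG]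
            rw [intervalIntegral.integral_of_le (zero_le_one' ℝ),
              ← integral_Icc_eq_integral_Ioc]
    -- step 2: integrate step1 over t
    have hvsqInt : IntervalIntegrable (fun t => (v (x₁, t)) ^ 2) volume 0 1 := by
      apply ContinuousOn.intervalIntegrable
      rw [Set.uIcc_of_le (zero_le_one' ℝ)]; exact (cg x₁ hx₁).pow 2
    have step2 := intervalIntegral.integral_mono_on (zero_le_one' ℝ)
      (intervalIntegrable_const (c := (v (x₁, x₂)) ^ 2))
      (hvsqInt.add (intervalIntegrable_const (c := G x₁))) step1
    simp only [intervalIntegral.integral_const, smul_eq_mul, sub_zero, one_mul,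
      intervalIntegral.integral_add hvsqInt (intervalIntegrable_const (c := G x₁))] at step2
    have hG1 : (∫ t in (0:ℝ)..1, (v (x₁, t)) ^ 2) ≤ G x₁ := by
      rw [hG]
      apply intervalIntegral.integral_mono_on (zero_le_one' ℝ) hvsqInt hFi
      intro s hs
      simp only [hF]
      nlinarith [sq_nonneg (pd2 v (x₁, s))]
    linarith
  -- inner integral bound
  have inner : ∀ x₁ ∈ Icc (0:ℝ) 1,
      (∫ x₂ in (0:ℝ)..ε, (v (x₁, x₂)) ^ 2) ≤ ε * (2 * G x₁) := by
    intro x₁ hx₁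
    have hint : IntervalIntegrable (fun x₂ => (v (x₁, x₂)) ^ 2) volume 0 ε := by
      apply ContinuousOn.intervalIntegrable
      exact ((cg x₁ hx₁).pow 2).mono (by
        rw [Set.uIcc_of_le hε0.le]; exact Icc_subset_Icc le_rfl hε1)
    have := intervalIntegral.integral_mono_on hε0.le hint
      (intervalIntegrable_const (c := 2 * G x₁)) (key x₁ hx₁)
    simp only [intervalIntegral.integral_const, smul_eq_mul] at this
    calc (∫ x₂ in (0:ℝ)..ε, (v (x₁, x₂)) ^ 2) ≤ (ε - 0) * (2 * G x₁) := this
      _ = ε * (2 * G x₁) := by ring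
  -- integrability of the marginals via Fubini
  have hGeq : G = fun x₁ => ∫ t in Icc (0:ℝ) 1, F (x₁, t) := by
    funext x₁
    simp only [hG]
    rw [intervalIntegral.integral_of_le (zero_le_one' ℝ), ← integral_Icc_eq_integral_Ioc]
  have hGint : IntervalIntegrable G volume 0 1 := by
    have h1 : Integrable F ((volume.restrict (Icc (0:ℝ) 1)).prod
        (volume.restrict (Icc (0:ℝ) 1))) := by
      rw [Measure.prod_restrict, ← Measure.volume_eq_prod]
      exact hFint
    have h2 := h1.integral_prod_left
    rw [intervalIntegrable_iff, uIoc_of_le (zero_le_one' ℝ)]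
    rw [hGeq]
    exact IntegrableOn.mono_set h2 Ioc_subset_Icc_self
  have hvQε : IntegrableOn (fun x => (v x) ^ 2) (Icc (0:ℝ) 1 ×ˢ Icc (0:ℝ) ε) := by
    apply ContinuousOn.integrableOn_compact (isCompact_Icc.prod isCompact_Icc)
    exact ((hvc.mono hUc).mono
      (Set.prod_mono Subset.rfl (Icc_subset_Icc le_rfl hε1))).pow 2
  have hIint : IntervalIntegrable
      (fun x₁ => ∫ x₂ in (0:ℝ)..ε, (v (x₁, x₂)) ^ 2) volume 0 1 := by
    have h1 : Integrable (fun x => (v x) ^ 2) ((volume.restrict (Icc (0:ℝ) 1)).prod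
        (volume.restrict (Icc (0:ℝ) ε))) := by
      rw [Measure.prod_restrict, ← Measure.volume_eq_prod]
      exact hvQε
    have h2 := h1.integral_prod_left
    rw [intervalIntegrable_iff, uIoc_of_le (zero_le_one' ℝ)]
    have heq : (fun x₁ => ∫ x₂ in (0:ℝ)..ε, (v (x₁, x₂)) ^ 2)
        = fun x₁ => ∫ x₂ in Icc (0:ℝ) ε, (v (x₁, x₂)) ^ 2 := by
      funext x₁
      rw [intervalIntegral.integral_of_le hε0.le, ← integral_Icc_eq_integral_Ioc]
    rw [heq]
    exact IntegrableOn.mono_set h2 Ioc_subset_Icc_self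
  -- outer integration
  have outer : (∫ x₁ in (0:ℝ)..1, ∫ x₂ in (0:ℝ)..ε, (v (x₁, x₂)) ^ 2)
      ≤ ∫ x₁ in (0:ℝ)..1, ε * (2 * G x₁) := by
    apply intervalIntegral.integral_mono_on (zero_le_one' ℝ) hIint
      ((hGint.const_mul 2).const_mul ε)
    exact inner
  have houter2 : (∫ x₁ in (0:ℝ)..1, ε * (2 * G x₁)) = 2 * ε * ∫ x₁ in (0:ℝ)..1, G x₁ := by
    rw [intervalIntegral.integral_const_mul, intervalIntegral.integral_const_mul]
    ring
  -- Fubini for the right-hand side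
  have hsplit : (∫ x in Q, F x) = ∫ x₁ in (0:ℝ)..1, G x₁ := by
    have hQint' : IntegrableOn F Q (volume.prod volume) := by
      rwa [← Measure.volume_eq_prod]
    calc (∫ x in Q, F x) = ∫ x in Q, F x ∂(volume.prod volume) := by
          rw [← Measure.volume_eq_prod]
      _ = ∫ x₁ in Icc (0:ℝ) 1, ∫ x₂ in Icc (0:ℝ) 1, F (x₁, x₂) :=
          setIntegral_prod F hQint'
      _ = ∫ x₁ in Icc (0:ℝ) 1, G x₁ := by rw [hGeq]
      _ = ∫ x₁ in Ioc (0:ℝ) 1, G x₁ := integral_Icc_eq_integral_Ioc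
      _ = ∫ x₁ in (0:ℝ)..1, G x₁ := (intervalIntegral.integral_of_le (zero_le_one' ℝ)).symm
  calc (∫ x₁ in (0:ℝ)..1, ∫ x₂ in (0:ℝ)..ε, (v (x₁, x₂)) ^ 2)
      ≤ ∫ x₁ in (0:ℝ)..1, ε * (2 * G x₁) := outer
    _ = 2 * ε * ∫ x₁ in (0:ℝ)..1, G x₁ := houter2
    _ = 2 * ε * ∫ x in Q, F x := by rw [hsplit]
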